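/- Let (S,𝔉,τ) be a PM space with continuous triangle function and I a strongly admissible ideal. Suppose x = {x_{jk}} is a strong I-statistically pre-Cauchy double sequence in S possessing a subsequence {x_{t_j t_k}} that strongly converges to L, where 0 < I-liminf_{m,n} (1/(mn)) |{(t_j,t_k) : t_j ≤ m, t_k ≤ n}| < ∞. Then x is strong I-statistically convergent to L. -/

import Mathlib

open Set

/-- A distance distribution function. -/
structure DDF where
  toFun : ℝ → ℝ
  mono' : Monotone toFun
  nonneg' : ∀ x, 0 ≤ toFun x
  le_one' : ∀ x, toFun x ≤ 1
  zero' : ∀ x ≤ 0, toFun x = 0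
  tendsto_one' : Filter.Tendsto toFun Filter.atTop (nhds 1)
  leftCont' : ∀ x > 0, ContinuousWithinAt toFun (Set.Iio x) x

instance : CoeFun DDF fun _ => ℝ → ℝ := ⟨DDF.toFun⟩

/-- The unit step at 0. -/
noncomputable def eps0 : DDF where
  toFun x := if 0 < x then 1 else 0
  mono' := by
    intro a b hab
    by_cases ha : 0 < a
    · simp [ha, lt_of_lt_of_le ha hab]
    · by_cases hb : 0 < b <;> simp [ha, hb]
  nonneg' := by intro x; split_ifs <;> norm_num
  le_one' := by intro x; split_ifs <;> norm_num
  zero' := by intro x hx; simp [not_lt.mpr hx]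
  tendsto_one' := by
    have h : (fun _ : ℝ => (1 : ℝ)) =ᶠ[Filter.atTop]
        fun x : ℝ => if 0 < x then (1:ℝ) else 0 := by
      filter_upwards [Filter.eventually_gt_atTop (0:ℝ)] with x hx
      simp [hx]
    exact tendsto_const_nhds.congr' h
  leftCont' := by
    intro x hx
    have h : (fun _ : ℝ => (1 : ℝ)) =ᶠ[nhdsWithin x (Set.Iio x)]
        fun y : ℝ => if 0 < y then (1:ℝ) else 0 := by
      have hev : ∀ᶠ y in nhds x, (0:ℝ) < y := eventually_gt_nhds hx
      filter_upwards [nhdsWithin_le_nhds hev] with y hy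
      simp [hy]
    have : Filter.Tendsto (fun y : ℝ => if 0 < y then (1:ℝ) else 0)
        (nhdsWithin x (Set.Iio x)) (nhds 1) := tendsto_const_nhds.congr' h
    simpa [ContinuousWithinAt, hx] using this

/-- The modified Lévy metric on distance distribution functions. -/
noncomputable def dL (F G : DDF) : ℝ :=
  sInf {h : ℝ | 0 < h ∧ h ≤ 1 ∧ ∀ x : ℝ, 0 < x → x < 1 / h →
    (F (x - h) - h ≤ G x ∧ G x ≤ F (x + h) + h ∧
     G (x - h) - h ≤ F x ∧ F x ≤ G (x + h) + h)}

/-- A probabilistic metric space under a triangle function. -/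
structure PMSpace (S : Type*) where
  F : S → S → DDF
  tri : DDF → DDF → DDF
  F_self : ∀ a, F a a = eps0
  F_ne : ∀ a b, a ≠ b → F a b ≠ eps0
  F_symm : ∀ a b, F a b = F b a
  F_triangle : ∀ a b c, ∀ x : ℝ, (tri (F a b) (F b c)) x ≤ (F a c) x
  tri_comm : ∀ G H, tri G H = tri H G
  tri_assoc : ∀ G H K, tri (tri G H) K = tri G (tri H K)
  tri_mono : ∀ G G' H, (∀ x, G x ≤ G' x) → ∀ x, (tri G H) x ≤ (tri G' H) x
  tri_id : ∀ G, tri eps0 G = G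

/-- Continuity of the triangle function with respect to the Lévy metric. -/
def TriContinuous {S : Type*} (P : PMSpace S) : Prop :=
  ∀ G H : DDF, ∀ ε > 0, ∃ η > 0, ∀ G' H' : DDF,
    dL G G' < η → dL H H' < η → dL (P.tri G H) (P.tri G' H') < ε

/-- Ideals, admissibility. -/
def IsIdeal {α : Type*} (I : Set (Set α)) : Prop :=
  ∅ ∈ I ∧ (∀ A B : Set α, A ∈ I → B ∈ I → A ∪ B ∈ I) ∧
    (∀ A B : Set α, B ⊆ A → A ∈ I → B ∈ I)

def Admissible (I : Set (Set (ℕ × ℕ))) : Prop :=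
  IsIdeal I ∧ Set.univ ∉ I ∧ ∀ p : ℕ × ℕ, ({p} : Set (ℕ × ℕ)) ∈ I

def StronglyAdmissible (I : Set (Set (ℕ × ℕ))) : Prop :=
  IsIdeal I ∧ Set.univ ∉ I ∧
    ∀ i : ℕ, ({i} ×ˢ (Set.univ : Set ℕ)) ∈ I ∧ ((Set.univ : Set ℕ) ×ˢ {i}) ∈ I

/-- `dens A m n` is `(1/(mn)) |{(j,k) ∈ A : j ≤ m, k ≤ n}|`. -/
noncomputable def dens (A : Set (ℕ × ℕ)) (m n : ℕ) : ℝ :=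
  ({jk ∈ A | 1 ≤ jk.1 ∧ jk.1 ≤ m ∧ 1 ≤ jk.2 ∧ jk.2 ≤ n}.ncard : ℝ) / (m * n)

/-- `dens2 A m n` is `(1/(m²n²)) |{((j,k),(p,q)) ∈ A : j,p ≤ m, k,q ≤ n}|`. -/
noncomputable def dens2 (A : Set ((ℕ × ℕ) × (ℕ × ℕ))) (m n : ℕ) : ℝ :=
  ({q ∈ A | 1 ≤ q.1.1 ∧ q.1.1 ≤ m ∧ 1 ≤ q.2.1 ∧ q.2.1 ≤ m ∧
      1 ≤ q.1.2 ∧ q.1.2 ≤ n ∧ 1 ≤ q.2.2 ∧ q.2.2 ≤ n}.ncard : ℝ) /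
    ((m : ℝ) ^ 2 * (n : ℝ) ^ 2)

variable {S : Type*}

/-- Strong `I`-statistical convergence via strong neighbourhoods `N_a(t)`. -/
def StrongIStatConv (I : Set (Set (ℕ × ℕ))) (P : PMSpace S)
    (x : ℕ → ℕ → S) (a : S) : Prop :=
  ∀ t > (0:ℝ), ∀ δ > (0:ℝ),
    {mn : ℕ × ℕ | δ ≤ dens
      {jk : ℕ × ℕ | ¬ (1 - t < (P.F a (x jk.1 jk.2)) t)} mn.1 mn.2} ∈ I

/-- Strong `I`-statistically pre-Cauchy via strong vicinities `𝔘(t)`. -/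
def StrongIStatPreCauchy (I : Set (Set (ℕ × ℕ))) (P : PMSpace S)
    (x : ℕ → ℕ → S) : Prop :=
  ∀ t > (0:ℝ), ∀ δ > (0:ℝ),
    {mn : ℕ × ℕ | δ ≤ dens2
      {q : (ℕ × ℕ) × (ℕ × ℕ) |
        ¬ (1 - t < (P.F (x q.1.1 q.1.2) (x q.2.1 q.2.2)) t)} mn.1 mn.2} ∈ I

/-- `A_y = {α : {(j,k) : y_{jk} < α} ∉ I}`, used for `I-liminf`. -/
def ASet (I : Set (Set (ℕ × ℕ))) (y : ℕ → ℕ → ℝ) : Set ℝ :=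
  {α : ℝ | {jk : ℕ × ℕ | y jk.1 jk.2 < α} ∉ I}

open Classical in
/-- `I-liminf y := inf A_y` if `A_y ≠ ∅`, and `∞` otherwise (in `EReal`). -/
noncomputable def ILiminf (I : Set (Set (ℕ × ℕ))) (y : ℕ → ℕ → ℝ) : EReal :=
  if ASet I y = ∅ then ⊤ else sInf ((fun a : ℝ => (a : EReal)) '' ASet I y)

section Helpers

/-- The defining set of the Lévy distance. -/
def dLSet (F G : DDF) : Set ℝ :=
  {h : ℝ | 0 < h ∧ h ≤ 1 ∧ ∀ x : ℝ, 0 < x → x < 1 / h →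
    (F (x - h) - h ≤ G x ∧ G x ≤ F (x + h) + h ∧
     G (x - h) - h ≤ F x ∧ F x ≤ G (x + h) + h)}

lemma dL_eq_sInf (F G : DDF) : dL F G = sInf (dLSet F G) := rfl

lemma one_mem_dLSet (F G : DDF) : (1:ℝ) ∈ dLSet F G := by
  refine ⟨one_pos, le_refl 1, fun x hx hx1 => ?_⟩
  refine ⟨?_, ?_, ?_, ?_⟩
  · calc F (x-1) - 1 ≤ 1 - 1 := by linarith [F.le_one' (x-1)]
    _ ≤ G x := by simpa using G.nonneg' x
  · calc G x ≤ 1 := G.le_one' x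
    _ ≤ F (x+1) + 1 := by linarith [F.nonneg' (x+1)]
  · calc G (x-1) - 1 ≤ 1 - 1 := by linarith [G.le_one' (x-1)]
    _ ≤ F x := by simpa using F.nonneg' x
  · calc F x ≤ 1 := F.le_one' x
    _ ≤ G (x+1) + 1 := by linarith [G.nonneg' (x+1)]

lemma dLSet_bddBelow (F G : DDF) : BddBelow (dLSet F G) :=
  ⟨0, fun h hh => hh.1.le⟩

lemma dL_lt_of_mem {F G : DDF} {h η : ℝ} (hm : h ∈ dLSet F G) (hlt : h < η) :
    dL F G < η :=
  lt_of_le_of_lt (csInf_le (dLSet_bddBelow F G) hm) hlt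

lemma eps0_apply (y : ℝ) : eps0 y = if 0 < y then 1 else 0 := rfl

lemma mem_dLSet_eps0 {F : DDF} {h : ℝ} (h0 : 0 < h) (h1 : h ≤ 1)
    (hF : 1 - h < F h) : h ∈ dLSet eps0 F := by
  refine ⟨h0, h1, fun x hx hx1 => ?_⟩
  have hmono : ∀ y : ℝ, h ≤ y → 1 - h ≤ F y := fun y hy =>
    le_trans hF.le (F.mono' hy)
  refine ⟨?_, ?_, ?_, ?_⟩
  · rw [eps0_apply]
    split_ifs with hc
    · have : h ≤ x := by linarith
      linarith [hmono x this]
    · linarith [F.nonneg' x]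
  · rw [eps0_apply]
    have : 0 < x + h := by linarith
    simp only [this, if_pos]
    linarith [F.le_one' x]
  · rw [eps0_apply, if_pos hx]
    linarith [F.le_one' (x - h)]
  · rw [eps0_apply, if_pos hx]
    have : h ≤ x + h := by linarith
    linarith [hmono (x+h) this]

lemma gt_of_dL_eps0_lt {H : DDF} {s : ℝ} (hs0 : 0 < s) (hs1 : s < 1)
    (hd : dL eps0 H < s) : 1 - s < H s := by
  have hne : (dLSet eps0 H).Nonempty := ⟨1, one_mem_dLSet _ _⟩
  obtain ⟨h, hmem, hlt⟩ := exists_lt_of_csInf_lt hne hd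
  obtain ⟨hp, hle1, hcond⟩ := hmem
  have hs1h : s < 1 / h := by
    rw [lt_div_iff₀ hp]
    nlinarith
  have := (hcond s hs0 hs1h).1
  have hpos : 0 < s - h := by linarith
  rw [eps0_apply, if_pos hpos] at this
  linarith

end Helpers

section Counting

/-- The truncation window. -/
def TruncW (m n : ℕ) : Set (ℕ × ℕ) :=
  {p | 1 ≤ p.1 ∧ p.1 ≤ m ∧ 1 ≤ p.2 ∧ p.2 ≤ n}

lemma TruncW_finite (m n : ℕ) : (TruncW m n).Finite := by
  apply Set.Finite.subset (Set.finite_Icc ((1,1) : ℕ × ℕ) (m,n))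
  rintro ⟨a,b⟩ ⟨h1,h2,h3,h4⟩
  simp only [Set.mem_Icc, Prod.mk_le_mk]
  exact ⟨⟨h1,h3⟩,⟨h2,h4⟩⟩

lemma dens_eq (A : Set (ℕ × ℕ)) (m n : ℕ) :
    dens A m n = ((A ∩ TruncW m n).ncard : ℝ) / (m * n) := rfl

lemma dens_nonneg (A : Set (ℕ × ℕ)) (m n : ℕ) : 0 ≤ dens A m n := by
  rw [dens_eq]; positivity

lemma dens_mono {A B : Set (ℕ × ℕ)} (h : A ⊆ B) (m n : ℕ) :
    dens A m n ≤ dens B m n := by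
  rw [dens_eq, dens_eq]
  have hcard : (A ∩ TruncW m n).ncard ≤ (B ∩ TruncW m n).ncard :=
    Set.ncard_le_ncard (Set.inter_subset_inter_left _ h)
      (Set.Finite.inter_of_right (TruncW_finite m n) B)
  gcongr

lemma ncard_prod' {α β : Type*} (s : Set α) (t : Set β) :
    (s ×ˢ t).ncard = s.ncard * t.ncard := by
  rw [← Nat.card_coe_set_eq, ← Nat.card_coe_set_eq,
    ← Nat.card_coe_set_eq, ← Nat.card_prod]
  exact Nat.card_congr (Equiv.Set.prod s t)

lemma dens2_eq (A : Set ((ℕ × ℕ) × (ℕ × ℕ))) (m n : ℕ) :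
    dens2 A m n = ((A ∩ (TruncW m n ×ˢ TruncW m n)).ncard : ℝ) /
      ((m : ℝ) ^ 2 * (n : ℝ) ^ 2) := by
  have hset : {q ∈ A | 1 ≤ q.1.1 ∧ q.1.1 ≤ m ∧ 1 ≤ q.2.1 ∧ q.2.1 ≤ m ∧
      1 ≤ q.1.2 ∧ q.1.2 ≤ n ∧ 1 ≤ q.2.2 ∧ q.2.2 ≤ n} =
      A ∩ (TruncW m n ×ˢ TruncW m n) := by
    ext ⟨⟨a,b⟩,⟨c,d⟩⟩
    simp only [Set.mem_sep_iff, Set.mem_inter_iff, Set.mem_prod]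
    constructor
    · rintro ⟨hm, h1,h2,h3,h4,h5,h6,h7,h8⟩
      exact ⟨hm, ⟨h1,h2,h5,h6⟩, ⟨h3,h4,h7,h8⟩⟩
    · rintro ⟨hm, ⟨h1,h2,h5,h6⟩, ⟨h3,h4,h7,h8⟩⟩
      exact ⟨hm, h1,h2,h3,h4,h5,h6,h7,h8⟩
  unfold dens2
  rw [hset]

lemma mul_dens_le_dens2 {U V : Set (ℕ × ℕ)} {Fa : Set ((ℕ × ℕ) × (ℕ × ℕ))}
    (hsub : U ×ˢ V ⊆ Fa) (m n : ℕ) :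
    dens U m n * dens V m n ≤ dens2 Fa m n := by
  rw [dens2_eq, dens_eq, dens_eq]
  have hfin : ((TruncW m n ×ˢ TruncW m n) : Set ((ℕ×ℕ)×(ℕ×ℕ))).Finite :=
    (TruncW_finite m n).prod (TruncW_finite m n)
  have h1 : ((U ×ˢ V) ∩ (TruncW m n ×ˢ TruncW m n)).ncard ≤
      (Fa ∩ (TruncW m n ×ˢ TruncW m n)).ncard :=
    Set.ncard_le_ncard (Set.inter_subset_inter_left _ hsub)
      (Set.Finite.inter_of_right hfin Fa)
  rw [Set.prod_inter_prod, ncard_prod'] at h1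
  rw [div_mul_div_comm]
  have hden : ((m:ℝ) * n) * ((m:ℝ) * n) = (m:ℝ)^2 * (n:ℝ)^2 := by ring
  rw [hden]
  gcongr
  exact_mod_cast h1

lemma ncard_Icc_nat (a b : ℕ) : (Set.Icc a b).ncard = b + 1 - a := by
  rw [← Finset.coe_Icc, Set.ncard_coe_finset, Nat.card_Icc]

lemma dens_T_le (t : ℕ → ℕ) (N m n : ℕ) (hm : 1 ≤ m) (hn : 1 ≤ n) :
    dens {p : ℕ × ℕ | ∃ j k : ℕ, p = (t j, t k)} m n ≤
      dens {p : ℕ × ℕ | ∃ j ≥ N, ∃ k ≥ N, p = (t j, t k)} m n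
        + (N : ℝ) / m + (N : ℝ) / n := by
  set T := {p : ℕ × ℕ | ∃ j k : ℕ, p = (t j, t k)}
  set TN := {p : ℕ × ℕ | ∃ j ≥ N, ∃ k ≥ N, p = (t j, t k)}
  set U1 : Set (ℕ × ℕ) := (t '' Set.Iio N) ×ˢ (Set.Icc 1 n)
  set U2 : Set (ℕ × ℕ) := (Set.Icc 1 m) ×ˢ (t '' Set.Iio N)
  have hsplit : T ∩ TruncW m n ⊆ (TN ∩ TruncW m n) ∪ U1 ∪ U2 := by
    rintro ⟨a, b⟩ ⟨⟨j, k, heq⟩, htr⟩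
    obtain ⟨h1, h2, h3, h4⟩ := htr
    by_cases hj : N ≤ j
    · by_cases hk : N ≤ k
      · exact Or.inl (Or.inl ⟨⟨j, hj, k, hk, heq⟩, h1, h2, h3, h4⟩)
      · refine Or.inr ⟨⟨h1, h2⟩, ⟨k, not_le.1 hk, ?_⟩⟩
        simp only [Prod.mk.injEq] at heq
        exact heq.2.symm
    · refine Or.inl (Or.inr ⟨⟨j, not_le.1 hj, ?_⟩, ⟨h3, h4⟩⟩)
      simp only [Prod.mk.injEq] at heq
      exact heq.1.symm
  have hU1 : U1.ncard ≤ N * n := by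
    rw [ncard_prod']
    have hIio : (Set.Iio N : Set ℕ).ncard = N := by
      rw [← Finset.coe_Iio, Set.ncard_coe_finset, Nat.card_Iio]
    have h1 : (t '' Set.Iio N).ncard ≤ N :=
      (Set.ncard_image_le (Set.finite_Iio N)).trans hIio.le
    have h2 : (Set.Icc 1 n).ncard = n := by rw [_root_.ncard_Icc_nat]; omega
    calc (t '' Set.Iio N).ncard * (Set.Icc 1 n).ncard ≤ N * (Set.Icc 1 n).ncard := by
          exact Nat.mul_le_mul_right _ h1
      _ = N * n := by rw [h2]
  have hU2 : U2.ncard ≤ m * N := by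
    rw [ncard_prod']
    have hIio : (Set.Iio N : Set ℕ).ncard = N := by
      rw [← Finset.coe_Iio, Set.ncard_coe_finset, Nat.card_Iio]
    have h1 : (t '' Set.Iio N).ncard ≤ N :=
      (Set.ncard_image_le (Set.finite_Iio N)).trans hIio.le
    have h2 : (Set.Icc 1 m).ncard = m := by rw [_root_.ncard_Icc_nat]; omega
    calc (Set.Icc 1 m).ncard * (t '' Set.Iio N).ncard ≤ (Set.Icc 1 m).ncard * N :=
          Nat.mul_le_mul_left _ h1
      _ = m * N := by rw [h2]
  have hfin : ((TN ∩ TruncW m n) ∪ U1 ∪ U2).Finite := by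
    refine (Set.Finite.union (Set.Finite.union ?_ ?_) ?_)
    · exact Set.Finite.inter_of_right (TruncW_finite m n) TN
    · exact Set.Finite.prod ((Set.finite_Iio N).image t) (Set.finite_Icc 1 n)
    · exact Set.Finite.prod (Set.finite_Icc 1 m) ((Set.finite_Iio N).image t)
  have hcard : (T ∩ TruncW m n).ncard ≤ (TN ∩ TruncW m n).ncard + N * n + m * N := by
    calc (T ∩ TruncW m n).ncard ≤ ((TN ∩ TruncW m n) ∪ U1 ∪ U2).ncard :=
          Set.ncard_le_ncard hsplit hfin
      _ ≤ ((TN ∩ TruncW m n) ∪ U1).ncard + U2.ncard := Set.ncard_union_le _ _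
      _ ≤ (TN ∩ TruncW m n).ncard + U1.ncard + U2.ncard := by
          linarith [Set.ncard_union_le (TN ∩ TruncW m n) U1]
      _ ≤ (TN ∩ TruncW m n).ncard + N * n + m * N := by omega
  rw [dens_eq, dens_eq]
  have hm' : (0:ℝ) < m := by exact_mod_cast hm
  have hn' : (0:ℝ) < n := by exact_mod_cast hn
  have key : ((T ∩ TruncW m n).ncard : ℝ) ≤
      ((TN ∩ TruncW m n).ncard : ℝ) + N * n + m * N := by exact_mod_cast hcard
  have expand : ((TN ∩ TruncW m n).ncard : ℝ) / (m * n) + (N:ℝ)/m + (N:ℝ)/n =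
      (((TN ∩ TruncW m n).ncard : ℝ) + N * n + m * N) / (m * n) := by
    field_simp
  rw [expand]
  gcongr

end Counting

section Ideal

lemma rows_mem_ideal {I : Set (Set (ℕ × ℕ))} (hI : StronglyAdmissible I) (M : ℕ) :
    {mn : ℕ × ℕ | mn.1 < M} ∈ I ∧ {mn : ℕ × ℕ | mn.2 < M} ∈ I := by
  induction M with
  | zero =>
      constructor <;>
      · convert hI.1.1 using 1
        ext mn
        simp
  | succ M ih =>
      have hrow : ({M} ×ˢ (Set.univ : Set ℕ)) ∈ I := (hI.2.2 M).1
      have hcol : ((Set.univ : Set ℕ) ×ˢ {M}) ∈ I := (hI.2.2 M).2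
      constructor
      · have : {mn : ℕ × ℕ | mn.1 < M + 1} =
            {mn : ℕ × ℕ | mn.1 < M} ∪ ({M} ×ˢ (Set.univ : Set ℕ)) := by
          ext ⟨a,b⟩
          simp only [Set.mem_setOf_eq, Set.mem_union, Set.mem_prod,
            Set.mem_singleton_iff, Set.mem_univ, and_true]
          omega
        rw [this]
        exact hI.1.2.1 _ _ ih.1 hrow
      · have : {mn : ℕ × ℕ | mn.2 < M + 1} =
            {mn : ℕ × ℕ | mn.2 < M} ∪ ((Set.univ : Set ℕ) ×ˢ {M}) := by
          ext ⟨a,b⟩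
          simp only [Set.mem_setOf_eq, Set.mem_union, Set.mem_prod,
            Set.mem_singleton_iff, Set.mem_univ, true_and]
          omega
        rw [this]
        exact hI.1.2.1 _ _ ih.2 hcol

end Ideal

/-- Let `x` be a strong `I`-statistically pre-Cauchy double sequence in a PM
space with continuous triangle function. If `x` has a subsequence
`{x_{t_j t_k}}` strongly converging to `L` with
`0 < I-liminf (1/(mn))|{(t_j,t_k) : t_j ≤ m, t_k ≤ n}| < ∞`, then `x` is strong
`I`-statistically convergent to `L`. -/
theorem strongIStatPreCauchy_with_subseq_implies_conv
    (P : PMSpace S) (hτ : TriContinuous P)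
    (I : Set (Set (ℕ × ℕ))) (hI : StronglyAdmissible I)
    (x : ℕ → ℕ → S) (hx : StrongIStatPreCauchy I P x)
    (t : ℕ → ℕ) (ht : StrictMono t) (L : S)
    (hsub : ∀ s > (0:ℝ), ∃ N : ℕ, ∀ j ≥ N, ∀ k ≥ N,
      1 - s < (P.F (x (t j) (t k)) L) s)
    (hliminf :
      0 < ILiminf I (fun m n =>
        dens {p : ℕ × ℕ | ∃ j k : ℕ, p = (t j, t k)} m n) ∧
      ILiminf I (fun m n =>
        dens {p : ℕ × ℕ | ∃ j k : ℕ, p = (t j, t k)} m n) < ⊤) :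
    StrongIStatConv I P x L := by
  intro s hs δ hδ
  set t₁ : ℝ := min s (1/2) with ht₁def
  have ht₁pos : 0 < t₁ := lt_min hs (by norm_num)
  have ht₁half : t₁ ≤ 1/2 := min_le_right _ _
  have ht₁s : t₁ ≤ s := min_le_left _ _
  have hbadsub : {jk : ℕ × ℕ | ¬ (1 - s < (P.F L (x jk.1 jk.2)) s)} ⊆
      {jk : ℕ × ℕ | ¬ (1 - t₁ < (P.F L (x jk.1 jk.2)) t₁)} := by
    intro jk hjk
    simp only [Set.mem_setOf_eq, not_lt] at *
    calc (P.F L (x jk.1 jk.2)) t₁ ≤ (P.F L (x jk.1 jk.2)) s :=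
          (P.F L (x jk.1 jk.2)).mono' ht₁s
      _ ≤ 1 - s := hjk
      _ ≤ 1 - t₁ := by linarith
  suffices hmain : {mn : ℕ × ℕ | δ ≤ dens
      {jk : ℕ × ℕ | ¬ (1 - t₁ < (P.F L (x jk.1 jk.2)) t₁)} mn.1 mn.2} ∈ I by
    refine hI.1.2.2 _ _ ?_ hmain
    intro mn hmn
    exact le_trans hmn (dens_mono hbadsub mn.1 mn.2)
  obtain ⟨η, hη, hco⟩ := hτ eps0 eps0 t₁ ht₁pos
  set t₀ : ℝ := min η 1 / 2 with ht₀def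
  have hmin : 0 < min η 1 := lt_min hη one_pos
  have ht₀pos : 0 < t₀ := by positivity
  have ht₀η : t₀ < η := by
    have h1 : min η 1 ≤ η := min_le_left _ _
    have : t₀ < min η 1 := by rw [ht₀def]; linarith
    linarith
  have ht₀1 : t₀ ≤ 1 := by
    have := min_le_right η 1
    rw [ht₀def]; linarith
  obtain ⟨N, hN⟩ := hsub t₀ ht₀pos
  set T : Set (ℕ × ℕ) := {p : ℕ × ℕ | ∃ j k : ℕ, p = (t j, t k)} with hTdef
  -- extract γ
  have hAne : ASet I (fun m n => dens T m n) ≠ ∅ := by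
    intro hemp
    unfold ILiminf at hliminf
    rw [if_pos hemp] at hliminf
    exact absurd hliminf.2 (lt_irrefl ⊤)
  have hinf : (0 : EReal) <
      sInf ((fun a : ℝ => (a : EReal)) '' ASet I (fun m n => dens T m n)) := by
    have h := hliminf.1
    unfold ILiminf at h
    rwa [if_neg hAne] at h
  obtain ⟨α, hα⟩ := Set.nonempty_iff_ne_empty.2 hAne
  have hsle : sInf ((fun a : ℝ => (a : EReal)) '' ASet I (fun m n => dens T m n))
      ≤ (α : EReal) := sInf_le ⟨α, hα, rfl⟩
  obtain ⟨c, hc0, hcS⟩ := exists_between hinf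
  have hct : c < ⊤ := lt_of_lt_of_le (hcS.trans_le hsle) le_top |>.trans_le le_top
  set γ : ℝ := c.toReal with hγdef
  have hγc : (γ : EReal) = c :=
    EReal.coe_toReal ((hcS.trans_le hsle).trans (EReal.coe_lt_top α)).ne
      (ne_bot_of_gt hc0)
  have hγpos : (0:ℝ) < γ := by
    have h : (0 : EReal) < (γ : EReal) := hγc ▸ hc0
    exact_mod_cast h
  have hγI : {mn : ℕ × ℕ | dens T mn.1 mn.2 < γ} ∈ I := by
    by_contra hcon
    have hmem : γ ∈ ASet I (fun m n => dens T m n) := hcon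
    have hle : sInf ((fun a : ℝ => (a : EReal)) '' ASet I (fun m n => dens T m n))
        ≤ (γ : EReal) := sInf_le ⟨γ, hmem, rfl⟩
    rw [hγc] at hle
    exact absurd (lt_of_lt_of_le hcS hle) (lt_irrefl c)
  -- constants
  set M₀ : ℕ := max 1 ⌈4 * (N:ℝ) / γ⌉₊ with hM₀def
  have hM₀1 : 1 ≤ M₀ := le_max_left _ _
  have hM₀γ : 4 * (N:ℝ) / γ ≤ M₀ := by
    refine le_trans (Nat.le_ceil _) ?_
    have h : ⌈4 * (N:ℝ) / γ⌉₊ ≤ M₀ := by rw [hM₀def]; exact le_max_right _ _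
    exact_mod_cast h
  set δ' : ℝ := (γ / 2) * δ with hδ'def
  have hδ'pos : 0 < δ' := by positivity
  set Far : Set ((ℕ×ℕ)×(ℕ×ℕ)) :=
    {q : (ℕ × ℕ) × (ℕ × ℕ) |
      ¬ (1 - t₀ < (P.F (x q.1.1 q.1.2) (x q.2.1 q.2.2)) t₀)} with hFardef
  have hFarI : {mn : ℕ × ℕ | δ' ≤ dens2 Far mn.1 mn.2} ∈ I :=
    hx t₀ ht₀pos δ' hδ'pos
  set A : Set (ℕ×ℕ) :=
    {jk : ℕ × ℕ | ¬ (1 - t₁ < (P.F L (x jk.1 jk.2)) t₁)} with hAdef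
  set TN : Set (ℕ×ℕ) := {p : ℕ × ℕ | ∃ j ≥ N, ∃ k ≥ N, p = (t j, t k)} with hTNdef
  -- the key inclusion
  have hkey : TN ×ˢ A ⊆ Far := by
    rintro ⟨⟨a, b⟩, ⟨c', d⟩⟩ ⟨⟨j, hj, k, hk, heq⟩, hbad⟩
    cases heq
    intro hcon
    have hKval : 1 - t₀ < (P.F (x (t j) (t k)) L) t₀ := hN j hj k hk
    have d1 : dL eps0 (P.F (x (t j) (t k)) (x c' d)) < η :=
      dL_lt_of_mem (mem_dLSet_eps0 ht₀pos ht₀1 hcon) ht₀η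
    have d2 : dL eps0 (P.F (x (t j) (t k)) L) < η :=
      dL_lt_of_mem (mem_dLSet_eps0 ht₀pos ht₀1 hKval) ht₀η
    have hd := hco _ _ d1 d2
    rw [P.tri_id] at hd
    have h3 : 1 - t₁ <
        (P.tri (P.F (x (t j) (t k)) (x c' d)) (P.F (x (t j) (t k)) L)) t₁ :=
      gt_of_dL_eps0_lt ht₁pos (by linarith) hd
    have htri := P.F_triangle L (x (t j) (t k)) (x c' d) t₁
    rw [P.F_symm L (x (t j) (t k))] at htri
    rw [P.tri_comm] at htri
    simp only [hAdef, Set.mem_setOf_eq, not_lt] at hbad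
    linarith
  -- ideal bookkeeping
  have hrows := (rows_mem_ideal hI M₀).1
  have hcols := (rows_mem_ideal hI M₀).2
  have hUnion : ({mn : ℕ × ℕ | δ' ≤ dens2 Far mn.1 mn.2}
      ∪ {mn : ℕ × ℕ | dens T mn.1 mn.2 < γ}
      ∪ {mn : ℕ × ℕ | mn.1 < M₀} ∪ {mn : ℕ × ℕ | mn.2 < M₀}) ∈ I :=
    hI.1.2.1 _ _ (hI.1.2.1 _ _ (hI.1.2.1 _ _ hFarI hγI) hrows) hcols
  refine hI.1.2.2 _ _ ?_ hUnion
  rintro ⟨m, n⟩ hmn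
  simp only [Set.mem_setOf_eq] at hmn
  simp only [Set.mem_union, Set.mem_setOf_eq]
  by_cases h1 : m < M₀
  · tauto
  by_cases h2 : n < M₀
  · tauto
  by_cases h3 : dens T m n < γ
  · tauto
  left; left; left
  push_neg at h1 h2 h3
  have hm1 : 1 ≤ m := le_trans hM₀1 h1
  have hn1 : 1 ≤ n := le_trans hM₀1 h2
  have hm' : (0:ℝ) < m := by exact_mod_cast hm1
  have hn' : (0:ℝ) < n := by exact_mod_cast hn1
  have hsplit := dens_T_le t N m n hm1 hn1
  rw [← hTdef, ← hTNdef] at hsplit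
  have hNm : (N:ℝ)/m ≤ γ/4 := by
    have hm'' : (M₀:ℝ) ≤ m := by exact_mod_cast h1
    rw [div_le_iff₀ hγpos] at hM₀γ
    rw [div_le_div_iff₀ hm' (by norm_num : (0:ℝ) < 4)]
    nlinarith
  have hNn : (N:ℝ)/n ≤ γ/4 := by
    have hn'' : (M₀:ℝ) ≤ n := by exact_mod_cast h2
    rw [div_le_iff₀ hγpos] at hM₀γ
    rw [div_le_div_iff₀ hn' (by norm_num : (0:ℝ) < 4)]
    nlinarith
  have hTN2 : γ/2 ≤ dens TN m n := by linarith
  have hprod := mul_dens_le_dens2 hkey m n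
  have hfinal : δ' ≤ dens TN m n * dens A m n := by
    rw [hδ'def]
    exact mul_le_mul hTN2 hmn hδ.le (le_trans (by linarith) hTN2)
  exact le_trans hfinal hprod
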